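/- Fix u ≥ 0. For the probability distribution on finite-dimensional F_2-vector spaces given by P(V) = (|∧²V| / (|Aut_{F_2}(V)| · |V|^u)) · Π_{i≥1}(1 + 2^{−u−i})^{−1}, the n-th moment of |V| equals Π_{k=0}^{n−1}(1 + 2^{k−u}). In particular for u = 0 and n = 1 the average of |V| is 2, and for u = 1, n = 1 it is 3/2. -/

import Mathlib

open Finset Filter Topology

/-- Malle's distribution with parameter `u` on isomorphism classes of finite
`F₂`-vector spaces, recorded as a function of the dimension `d`:
`P(V) = |∧²V| / (|Aut V| · |V|^u) · ∏_{i ≥ 1} (1 + 2^{-u-i})⁻¹`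
where `|∧²V| = 2^{d(d-1)/2}`, `|Aut V| = ∏_{i<d} (2^d - 2^i)` and `|V| = 2^d`. -/
noncomputable def malleP (u d : ℕ) : ℝ :=
  (2 : ℝ) ^ (d * (d - 1) / 2) /
      ((∏ i ∈ Finset.range d, ((2 : ℝ) ^ d - 2 ^ i)) * 2 ^ (d * u)) *
    (∏' i : ℕ, (1 + ((2 : ℝ) ^ (u + i + 1))⁻¹))⁻¹

/-- for every `u ≥ 0`, the `n`-th moment of `|V|` for Malle's
distribution `malleP u` is `∏_{k=0}^{n-1} (1 + 2^{k-u})`; in particular for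
`u = 0, n = 1` the average of `|V|` is `2` and for `u = 1, n = 1` it is `3/2`. -/
noncomputable def aF (d : ℕ) : ℝ := ∏ j ∈ Finset.range d, ((2:ℝ) ^ (j+1) - 1)

lemma aF_pos (d : ℕ) : 0 < aF d := by
  apply Finset.prod_pos
  intro i _
  have : (2:ℝ)^1 ≤ 2^(i+1) := pow_le_pow_right₀ (by norm_num) (by omega)
  simp at this; linarith

lemma aF_succ (d : ℕ) : aF (d+1) = aF d * ((2:ℝ) ^ (d+1) - 1) := by
  rw [aF, Finset.prod_range_succ]; rfl

lemma aF_zero : aF 0 = 1 := by simp [aF]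

lemma summable_fE (x : ℝ) : Summable (fun d : ℕ => x ^ d / aF d) := by
  apply summable_of_ratio_norm_eventually_le (r := 1/2) (by norm_num)
  filter_upwards [eventually_ge_atTop (⌈2 * |x|⌉₊)] with d hd
  have h2 : (2:ℝ) * |x| ≤ 2^(d+1) - 1 := by
    have h1 : (2:ℝ) * |x| ≤ d := by
      have := Nat.le_ceil (2 * |x|)
      calc (2:ℝ) * |x| ≤ (⌈2 * |x|⌉₊ : ℝ) := this
        _ ≤ d := by exact_mod_cast hd
    have h3 : (d:ℝ) ≤ 2^(d+1) - 1 := by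
      have := Nat.lt_two_pow_self (n := d)
      have : (d:ℝ) < 2^d := by exact_mod_cast this
      have h4 : (2:ℝ)^d ≤ 2^(d+1) - 2^d := by
        rw [pow_succ]; ring_nf; linarith [pow_pos (by norm_num : (0:ℝ) < 2) d]
      have h5 : (1:ℝ) ≤ 2^d := one_le_pow₀ (by norm_num)
      linarith
    linarith
  have hpos := aF_pos d
  have hpos1 : (0:ℝ) < 2^(d+1) - 1 := by
    have : (1:ℝ) < 2^(d+1) := one_lt_pow₀ (by norm_num) (by omega)
    linarith
  rw [aF_succ]
  rw [Real.norm_eq_abs, Real.norm_eq_abs, abs_div, abs_div, abs_of_pos hpos,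
    abs_of_pos (mul_pos hpos hpos1), pow_succ, abs_mul]
  have key : |x| ≤ (1/2) * (2^(d+1) - 1) := by linarith
  calc |x ^ d| * |x| / (aF d * (2^(d+1)-1))
      = (|x ^ d| / aF d) * (|x| / (2^(d+1)-1)) := (div_mul_div_comm _ _ _ _).symm
    _ ≤ (|x ^ d| / aF d) * (1/2) := by
        apply mul_le_mul_of_nonneg_left _ (by positivity)
        rw [div_le_iff₀ hpos1]; linarith
    _ = 1/2 * (|x ^ d| / aF d) := by ring

noncomputable def fE (x : ℝ) : ℝ := ∑' d : ℕ, x ^ d / aF d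

noncomputable def gAux (x : ℝ) : ℕ → ℝ
  | 0 => 0
  | d+1 => x * (x ^ d / aF d)

lemma fE_funEq (x : ℝ) : fE (2 * x) = (1 + x) * fE x := by
  set g : ℕ → ℝ := gAux x with hgdef
  have hg0 : g 0 = 0 := rfl
  have hg1 : ∀ d, g (d+1) = x * (x ^ d / aF d) := fun d => rfl
  have hgs : Summable g := by
    apply (summable_nat_add_iff 1).mp
    simpa [hg1] using (summable_fE x).mul_left x
  have hpt : ∀ d : ℕ, (2*x) ^ d / aF d = x ^ d / aF d + g d := by
    intro d
    cases d with
    | zero => simp [aF_zero, hg0]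
    | succ d =>
      rw [hg1, aF_succ]
      have h1 := (aF_pos d).ne'
      have h2 : ((2:ℝ)^(d+1) - 1) ≠ 0 := by
        have : (1:ℝ) < 2^(d+1) := one_lt_pow₀ (by norm_num) (by omega)
        linarith
      field_simp
      ring
  calc fE (2*x) = ∑' d : ℕ, (x ^ d / aF d + g d) := tsum_congr hpt
    _ = fE x + ∑' d, g d := Summable.tsum_add (summable_fE x) hgs
    _ = fE x + (g 0 + ∑' d, g (d+1)) := by rw [Summable.tsum_eq_zero_add hgs]
    _ = fE x + x * fE x := by
        simp only [hg0, hg1, zero_add]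
        rw [tsum_mul_left]
        rfl
    _ = (1 + x) * fE x := by ring

lemma fE_iter (x : ℝ) (n : ℕ) :
    fE (2 ^ n * x) = (∏ k ∈ Finset.range n, (1 + 2 ^ k * x)) * fE x := by
  induction n with
  | zero => simp
  | succ n ih =>
    have : (2:ℝ) ^ (n+1) * x = 2 * (2 ^ n * x) := by ring
    rw [this, fE_funEq, ih, Finset.prod_range_succ]
    ring

lemma one_le_fE {x : ℝ} (hx : 0 ≤ x) : 1 ≤ fE x := by
  have := Summable.le_tsum (summable_fE x) 0
    (fun j _ => div_nonneg (pow_nonneg hx j) (aF_pos j).le)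
  simpa [aF_zero, fE] using this

set_option maxHeartbeats 800000 in
lemma fE_le {x : ℝ} (hx0 : 0 ≤ x) (hx1 : x ≤ 1) :
    fE x ≤ 1 + x * (∑' d : ℕ, 1 / aF (d+1)) := by
  have hs1 : Summable (fun d : ℕ => x ^ (d+1) / aF (d+1)) :=
    (summable_nat_add_iff (f := fun d : ℕ => x ^ d / aF d) 1).mpr (summable_fE x)
  have hsC : Summable (fun d : ℕ => (1:ℝ) / aF (d+1)) := by
    have := (summable_nat_add_iff (f := fun d : ℕ => (1:ℝ) ^ d / aF d) 1).mpr (summable_fE 1)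
    simpa using this
  have h0 : fE x = 1 + ∑' d : ℕ, x ^ (d+1) / aF (d+1) := by
    rw [fE, Summable.tsum_eq_zero_add (summable_fE x)]
    simp [aF_zero]
  rw [h0]
  have hb : ∑' d : ℕ, x ^ (d+1) / aF (d+1) ≤ ∑' d : ℕ, x * (1 / aF (d+1)) := by
    apply Summable.tsum_le_tsum _ hs1 (hsC.mul_left x)
    intro d
    have hxp : x ^ (d+1) ≤ x := by
      calc x ^ (d+1) = x * x ^ d := by ring
        _ ≤ x * 1 := mul_le_mul_of_nonneg_left (pow_le_one₀ hx0 hx1) hx0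
        _ = x := by ring
    have := aF_pos (d+1)
    rw [div_le_iff₀ this, mul_comm x (1 / aF (d+1))]
    calc x ^ (d+1) ≤ x := hxp
      _ = 1 / aF (d+1) * x * aF (d+1) := by field_simp
  rw [tsum_mul_left] at hb
  linarith

lemma fE_tendsto_one (x : ℝ) (hx : 0 ≤ x) :
    Tendsto (fun N : ℕ => fE (x / 2 ^ N)) atTop (𝓝 1) := by
  set C := ∑' d : ℕ, 1 / aF (d+1) with hC
  have hx2 : Tendsto (fun N : ℕ => x / 2 ^ N) atTop (𝓝 0) := by
    have : (fun N : ℕ => x / 2 ^ N) = fun N : ℕ => x * (1/2 : ℝ) ^ N := by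
      ext N; rw [div_pow, one_pow]; ring
    rw [this]
    simpa using (tendsto_pow_atTop_nhds_zero_of_lt_one (by norm_num) (by norm_num :
      (1/2:ℝ) < 1)).const_mul x
  have hup : Tendsto (fun N : ℕ => 1 + (x / 2 ^ N) * C) atTop (𝓝 1) := by
    have := (hx2.mul_const C).const_add 1
    simpa using this
  apply tendsto_of_tendsto_of_tendsto_of_le_of_le' tendsto_const_nhds hup
  · filter_upwards with N
    exact one_le_fE (by positivity)
  · filter_upwards [hx2.eventually_le_const (by norm_num : (0:ℝ) < 1)] with N h
    exact fE_le (by positivity) h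

lemma multipliable_g {x : ℝ} (hx : 0 ≤ x) :
    Multipliable (fun i : ℕ => 1 + x / 2 ^ (i+1)) := by
  have H : ∀ (_ : Unit), Summable (fun n : ℕ => Real.log (1 + x / 2 ^ (n+1))) := by
    intro _
    refine Summable.of_nonneg_of_le (f := fun i : ℕ => x * (1/2 : ℝ) ^ (i+1))
      (fun i => ?_) (fun i => ?_) ?_
    · apply Real.log_nonneg
      have : (0:ℝ) ≤ x / 2 ^ (i+1) := by positivity
      linarith
    · have h1 := Real.log_le_sub_one_of_pos
        (show (0:ℝ) < 1 + x / 2 ^ (i+1) by positivity)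
      have h2 : (1:ℝ) + x / 2 ^ (i+1) - 1 = x * (1/2:ℝ) ^ (i+1) := by
        rw [div_pow, one_pow]; ring
      linarith
    · exact (summable_nat_add_iff (f := fun i : ℕ => x * (1/2 : ℝ) ^ i) 1).mpr
        ((summable_geometric_of_lt_one (by norm_num) (by norm_num)).mul_left x)
  exact Real.multipliable_of_summable_log
    (fun i => show (0:ℝ) < 1 + x / 2 ^ (i+1) by positivity) (H ())

lemma fE_eq_tprod {x : ℝ} (hx : 0 ≤ x) :
    fE x = ∏' i : ℕ, (1 + x / 2 ^ (i+1)) := by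
  have M := multipliable_g hx
  have h1 : Tendsto (fun N : ℕ => ∏ i ∈ Finset.range N, (1 + x / 2 ^ (i+1))) atTop
      (𝓝 (∏' i : ℕ, (1 + x / 2 ^ (i+1)))) := M.hasProd.tendsto_prod_nat
  have h2 := fE_tendsto_one x hx
  have h3 := h1.mul h2
  rw [mul_one] at h3
  have h4 : ∀ N : ℕ, (∏ i ∈ Finset.range N, (1 + x / 2 ^ (i+1))) * fE (x / 2 ^ N) = fE x := by
    intro N
    have hiter := fE_iter (x / 2 ^ N) N
    have hxx : (2:ℝ) ^ N * (x / 2 ^ N) = x := by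
      field_simp
    rw [hxx] at hiter
    rw [hiter]
    congr 1
    rw [← Finset.prod_range_reflect (fun j => 1 + x / 2 ^ (j+1)) N]
    apply Finset.prod_congr rfl
    intro k hk
    rw [Finset.mem_range] at hk
    have h5 : N - 1 - k + 1 = N - k := by omega
    rw [h5]
    have h6 : (2:ℝ) ^ N = 2 ^ (N - k) * 2 ^ k := by
      rw [← pow_add]; congr 1; omega
    rw [h6]
    have hA : (0:ℝ) < 2 ^ (N - k) := by positivity
    have hB : (0:ℝ) < 2 ^ k := by positivity
    field_simp
  exact tendsto_nhds_unique (by simpa [h4] using (tendsto_const_nhds :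
    Tendsto (fun _ : ℕ => fE x) atTop (𝓝 (fE x)))) h3

lemma autProd (d : ℕ) :
    ∏ i ∈ Finset.range d, ((2:ℝ) ^ d - 2 ^ i) = 2 ^ (d * (d-1) / 2) * aF d := by
  have h1 : ∀ i ∈ Finset.range d, (2:ℝ) ^ d - 2 ^ i = 2 ^ i * ((2:ℝ) ^ (d - i) - 1) := by
    intro i hi
    rw [Finset.mem_range] at hi
    have : (2:ℝ) ^ i * 2 ^ (d - i) = 2 ^ d := by rw [← pow_add]; congr 1; omega
    rw [mul_sub, this, mul_one]
  rw [Finset.prod_congr rfl h1, Finset.prod_mul_distrib]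
  congr 1
  · rw [Finset.prod_pow_eq_pow_sum, Finset.sum_range_id]
  · rw [aF, ← Finset.prod_range_reflect (fun j => (2:ℝ) ^ (j+1) - 1) d]
    apply Finset.prod_congr rfl
    intro k hk
    rw [Finset.mem_range] at hk
    congr 2
    omega

lemma tprodC (u : ℕ) :
    (∏' i : ℕ, (1 + ((2:ℝ) ^ (u + i + 1))⁻¹)) = fE (((2:ℝ) ^ u)⁻¹) := by
  rw [fE_eq_tprod (by positivity)]
  apply tprod_congr
  intro i
  congr 1
  rw [show u + i + 1 = u + (i + 1) by omega, pow_add, mul_inv, div_eq_mul_inv]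

lemma mainMoment (u n : ℕ) :
    ∑' d : ℕ, ((2:ℝ) ^ d) ^ n * malleP u d
      = ∏ k ∈ Finset.range n, (1 + (2:ℝ) ^ k / 2 ^ u) := by
  have hC := tprodC u
  have hCpos : (0:ℝ) < fE (((2:ℝ) ^ u)⁻¹) :=
    lt_of_lt_of_le one_pos (one_le_fE (by positivity))
  have hF : fE (((2:ℝ) ^ u)⁻¹) ≠ 0 := hCpos.ne'
  have key : ∀ d : ℕ, ((2:ℝ) ^ n * ((2:ℝ) ^ u)⁻¹) ^ d = ((2:ℝ) ^ d) ^ n / (2:ℝ) ^ (d * u) := by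
    intro d
    rw [mul_pow, inv_pow, ← pow_mul, ← pow_mul, ← pow_mul, Nat.mul_comm n d,
      Nat.mul_comm u d, div_eq_mul_inv]
  have hterm : ∀ d : ℕ, ((2:ℝ) ^ d) ^ n * malleP u d
      = ((2:ℝ) ^ n * ((2:ℝ) ^ u)⁻¹) ^ d / aF d * (fE (((2:ℝ) ^ u)⁻¹))⁻¹ := by
    intro d
    rw [malleP, autProd, hC, key]
    have h2 : ((2:ℝ) ^ (d * (d-1) / 2)) ≠ 0 := by positivity
    have hden : (2:ℝ) ^ (d*(d-1)/2) * aF d * 2 ^ (d*u)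
        = 2 ^ (d*(d-1)/2) * (aF d * 2 ^ (d*u)) := by ring
    rw [hden, div_mul_cancel_left₀ h2]
    ring
  rw [tsum_congr hterm, tsum_mul_right]
  have hfe : (∑' d : ℕ, ((2:ℝ) ^ n * ((2:ℝ) ^ u)⁻¹) ^ d / aF d)
      = fE ((2:ℝ) ^ n * ((2:ℝ) ^ u)⁻¹) := rfl
  rw [hfe, fE_iter, mul_assoc, mul_inv_cancel₀ hF, mul_one]
  exact Finset.prod_congr rfl fun k _ => by rw [div_eq_mul_inv]

theorem stmt15 (u n : ℕ) :
    (∑' d : ℕ, ((2 : ℝ) ^ d) ^ n * malleP u d =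
        ∏ k ∈ Finset.range n, (1 + (2 : ℝ) ^ k / 2 ^ u)) ∧
    (∑' d : ℕ, (2 : ℝ) ^ d * malleP 0 d = 2) ∧
    (∑' d : ℕ, (2 : ℝ) ^ d * malleP 1 d = 3 / 2) := by
  refine ⟨mainMoment u n, ?_, ?_⟩
  · have h := mainMoment 0 1
    simp only [pow_one, Finset.prod_range_one, pow_zero] at h
    rw [h]; norm_num
  · have h := mainMoment 1 1
    simp only [pow_one, Finset.prod_range_one, pow_zero] at h
    rw [h]; norm_num
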